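/- Let x ∈ (0,1) have regular continued fraction expansion x = [0; a₁, a₂, a₃, …]. If a₁ > 2, then R(x) = [0; a₁-2, a₂, a₃, …], where R is the Romik map. -/

import Mathlib

noncomputable def romik (x : ℝ) : ℝ :=
  if x < 1/3 then x / (1 - 2*x) else if x < 1/2 then 1/x - 2 else 2 - 1/x

theorem romik_rcf_first_branch (x : ℝ) (hx : x ∈ Set.Ioo (0 : ℝ) 1)
    (hirr : Irrational x) (a : ℕ → ℕ)
    (ha : ∀ n : ℕ, (GenContFract.of x).partDens.get? n = some ((a (n + 1) : ℝ)))
    (h1 : 2 < a 1) :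
    ∀ n : ℕ, (GenContFract.of (romik x)).partDens.get? n =
      some (if n = 0 then ((a 1 : ℝ) - 2) else ((a (n + 1) : ℝ))) := by
  obtain ⟨hx0, hx1⟩ := hx
  have hfx : Int.fract x = x := Int.fract_eq_self.mpr ⟨hx0.le, hx1⟩
  have hfxne : Int.fract x ≠ 0 := by rw [hfx]; exact hx0.ne'
  have hhead : (GenContFract.of x).s.get? 0 = some ⟨1, (⌊x⁻¹⌋ : ℝ)⟩ := by
    have := GenContFract.of_s_head hfxne
    rw [hfx] at this
    exact this
  have hpd0 : (GenContFract.of x).partDens.get? 0 = some ((⌊x⁻¹⌋ : ℝ)) :=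
    GenContFract.partDen_eq_s_b hhead
  have hfloor : ⌊x⁻¹⌋ = (a 1 : ℤ) := by
    have h0 := ha 0
    rw [hpd0] at h0
    have : ((⌊x⁻¹⌋ : ℝ)) = ((a 1 : ℕ) : ℝ) := by simpa using h0
    exact_mod_cast this
  have hxinv_irr : Irrational x⁻¹ := hirr.inv
  have hxinv3 : (3 : ℝ) < x⁻¹ := by
    have h3 : (3 : ℤ) ≤ ⌊x⁻¹⌋ := by rw [hfloor]; exact_mod_cast h1
    have hle : (3 : ℝ) ≤ x⁻¹ := le_trans (by exact_mod_cast h3) (Int.floor_le _)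
    rcases hle.lt_or_eq with h | h
    · exact h
    · exact absurd h.symm (by simpa using hxinv_irr.ne_int 3)
  have hxx : x * x⁻¹ = 1 := mul_inv_cancel₀ hx0.ne'
  have hx13 : x < 1/3 := by nlinarith
  have hrom : romik x = x / (1 - 2*x) := if_pos hx13
  set y := x / (1 - 2*x) with hy
  have hden : (0:ℝ) < 1 - 2*x := by linarith
  have hy0 : 0 < y := div_pos hx0 hden
  have hyinv : y⁻¹ = x⁻¹ - 2 := by
    rw [hy]
    field_simp
  have hyinv1 : (1:ℝ) < y⁻¹ := by rw [hyinv]; linarith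
  have hy1 : y < 1 := by
    have hyy : y * y⁻¹ = 1 := mul_inv_cancel₀ hy0.ne'
    nlinarith
  have hfy : Int.fract y = y := Int.fract_eq_self.mpr ⟨hy0.le, hy1⟩
  have hfract_inv_eq : Int.fract y⁻¹ = Int.fract x⁻¹ := by
    rw [hyinv, show x⁻¹ - 2 = x⁻¹ - ((2:ℤ):ℝ) by norm_num, Int.fract_sub_intCast]
  have hfloory : ⌊y⁻¹⌋ = ⌊x⁻¹⌋ - 2 := by
    rw [hyinv, show x⁻¹ - 2 = x⁻¹ - ((2:ℤ):ℝ) by norm_num, Int.floor_sub_intCast]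
  have hfxinvne : Int.fract x⁻¹ ≠ 0 := by
    intro h
    have := Int.floor_add_fract x⁻¹
    rw [h, add_zero] at this
    exact hxinv_irr.ne_int ⌊x⁻¹⌋ this.symm
  have hfyinvne : Int.fract y⁻¹ ≠ 0 := by rw [hfract_inv_eq]; exact hfxinvne
  have hs_eq : ∀ m, (GenContFract.of y⁻¹).s.get? m = (GenContFract.of x⁻¹).s.get? m := by
    intro m
    cases m with
    | zero =>
      show (GenContFract.of y⁻¹).s.head = (GenContFract.of x⁻¹).s.head
      rw [GenContFract.of_s_head hfyinvne, GenContFract.of_s_head hfxinvne, hfract_inv_eq]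
    | succ m =>
      rw [GenContFract.of_s_succ, GenContFract.of_s_succ, hfract_inv_eq]
  intro n
  rw [hrom]
  cases n with
  | zero =>
    have hheady : (GenContFract.of y).s.get? 0 = some ⟨1, (⌊y⁻¹⌋ : ℝ)⟩ := by
      have h := GenContFract.of_s_head (v := y) (by rw [hfy]; exact hy0.ne')
      rw [hfy] at h
      exact h
    have := GenContFract.partDen_eq_s_b hheady
    rw [this]
    simp only [if_pos rfl]
    congr 1
    rw [hfloory, hfloor]
    push_cast
    ring
  | succ n =>
    have hs : (GenContFract.of y).s.get? (n+1) = (GenContFract.of x).s.get? (n+1) := by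
      rw [GenContFract.of_s_succ, GenContFract.of_s_succ, hfy, hfx]
      exact hs_eq n
    have hp : (GenContFract.of y).partDens.get? (n+1) = (GenContFract.of x).partDens.get? (n+1) := by
      simp [GenContFract.partDens, Stream'.Seq.map_get?, hs]
    rw [hp, ha (n+1)]
    simp
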